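/- Let A → B be a homomorphism of commutative rings, I ⊆ B an ideal, M a module over B/I (regarded also as a B-module), and N a natural number. Then the canonical J^N(B/A)-linear map J^N_{B/A}(M) → J^N_{(B/I)/A}(M), induced by the surjection B ⊗_A M → (B/I) ⊗_A M, is surjective, and its kernel equals I · J^N_{B/A}(M), where I acts through the first structure map p₁. In other words, there is a short exact sequence 0 → I · J^N_{B/A}(M) → J^N_{B/A}(M) → J^N_{(B/I)/A}(M) → 0. -/

import Mathlib

/-!
Basic infrastructure for jet algebras and jet modules, following the paper
"Basics of jet modules and algebraic linear differential operators".

For a ring homomorphism `k → A`, the diagonal ideal `I_{A/k} ⊆ A ⊗[k] A` is the kernel of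
the multiplication map; the `N`-th jet algebra is `J^N(A/k) = (A ⊗[k] A) ⧸ I_{A/k}^{N+1}`,
with its two `A`-algebra structure maps `p₁ : a ↦ a ⊗ 1` and `p₂ : a ↦ 1 ⊗ a`.
For an `A`-module `M`, `A ⊗[k] M` is a module over `A ⊗[k] A` via
`(a ⊗ b) • (x ⊗ m) = (a * x) ⊗ (b • m)`, and the `N`-th jet module is
`J^N(M/k) = (A ⊗[k] M) ⧸ I_{A/k}^{N+1} · (A ⊗[k] M)`, a module over `J^N(A/k)`,
equipped with the universal filtered derivation `d^N : M → J^N(M/k)`, `m ↦ [1 ⊗ m]`.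
-/

open scoped TensorProduct

namespace JetPaper

section Bimodule

variable (R B C M P : Type*) [CommRing R]
  [CommRing B] [Algebra R B] [CommRing C] [Algebra R C]
  [AddCommGroup M] [Module R M] [Module B M] [IsScalarTower R B M]
  [AddCommGroup P] [Module R P] [Module C P] [IsScalarTower R C P]

/-- The action of `C` on `M ⊗[R] P` through the right-hand factor, as an algebra
homomorphism into endomorphisms. -/
noncomputable def rightSMulEnd : C →ₐ[R] Module.End R (M ⊗[R] P) where
  toFun c := LinearMap.lTensor M (Algebra.lsmul R R P c)
  map_one' := LinearMap.ext fun x => by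
    induction x using TensorProduct.induction_on with
    | zero => simp
    | tmul m p => simp
    | add u v hu hv => simp only [map_add, hu, hv]
  map_mul' c c' := LinearMap.ext fun x => by
    induction x using TensorProduct.induction_on with
    | zero => simp
    | tmul m p => simp [mul_smul, Module.End.mul_apply]
    | add u v hu hv => simp only [map_add, Module.End.mul_apply] at hu hv ⊢; rw [hu, hv]
  map_zero' := LinearMap.ext fun x => by
    induction x using TensorProduct.induction_on with
    | zero => simp
    | tmul m p => simp
    | add u v hu hv => simp only [map_add, hu, hv]
  map_add' c c' := LinearMap.ext fun x => by
    induction x using TensorProduct.induction_on with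
    | zero => simp
    | tmul m p => simp [add_smul, TensorProduct.tmul_add]
    | add u v hu hv =>
        simp only [map_add, LinearMap.add_apply] at hu hv ⊢
        rw [hu, hv]
  commutes' r := LinearMap.ext fun x => by
    induction x using TensorProduct.induction_on with
    | zero => simp
    | tmul m p =>
        simp only [LinearMap.lTensor_tmul, Algebra.lsmul_coe,
          Module.algebraMap_end_apply, algebraMap_smul]
        rw [TensorProduct.tmul_smul]
    | add u v hu hv => simp only [map_add, hu, hv]

@[simp] lemma rightSMulEnd_tmul (c : C) (m : M) (p : P) :
    rightSMulEnd R C M P c (m ⊗ₜ[R] p) = m ⊗ₜ[R] (c • p) := by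
  simp [rightSMulEnd]

/-- The algebra homomorphism `B ⊗[R] C → End (M ⊗[R] P)` realizing the natural
bimodule structure `(b ⊗ c) • (m ⊗ p) = (b • m) ⊗ (c • p)`. -/
noncomputable def bimodMap : (B ⊗[R] C) →ₐ[R] Module.End R (M ⊗[R] P) :=
  Algebra.TensorProduct.lift (Algebra.lsmul R R (M ⊗[R] P)) (rightSMulEnd R C M P)
    (fun b c => LinearMap.ext fun x => by
      induction x using TensorProduct.induction_on with
      | zero => simp [Module.End.mul_apply]
      | tmul m p => simp [Module.End.mul_apply, TensorProduct.smul_tmul']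
      | add u v hu hv =>
          simp only [Module.End.mul_apply] at hu hv ⊢
          simp only [map_add, hu, hv])

/-- The `B ⊗[R] C`-module structure on `M ⊗[R] P`, where `B` acts through the left factor
and `C` through the right one. -/
noncomputable def bimodule : Module (B ⊗[R] C) (M ⊗[R] P) :=
  Module.compHom _ (bimodMap R B C M P).toRingHom

/-- The action of `C` on `M ⊗[R] P` through the right-hand factor, as a module structure. -/
noncomputable def rightTensorModule : Module C (M ⊗[R] P) :=
  Module.compHom _ (rightSMulEnd R C M P).toRingHom

end Bimodule

section BiTensorDef

/-- Type synonym for `M ⊗[R] P`, regarded as a module over `B ⊗[R] C`, where `B` acts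
through the left factor and `C` through the right factor. -/
@[nolint unusedArguments]
def BiTensor (R B C M P : Type*) [CommRing R]
    [CommRing B] [Algebra R B] [CommRing C] [Algebra R C]
    [AddCommGroup M] [Module R M] [Module B M] [IsScalarTower R B M]
    [AddCommGroup P] [Module R P] [Module C P] [IsScalarTower R C P] : Type _ :=
  M ⊗[R] P

variable (R B C M P : Type*) [CommRing R]
  [CommRing B] [Algebra R B] [CommRing C] [Algebra R C]
  [AddCommGroup M] [Module R M] [Module B M] [IsScalarTower R B M]
  [AddCommGroup P] [Module R P] [Module C P] [IsScalarTower R C P]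

/-- The canonical (identity) map `M ⊗[R] P → BiTensor R B C M P`. -/
def BiTensor.of : M ⊗[R] P → BiTensor R B C M P := id

noncomputable instance : AddCommGroup (BiTensor R B C M P) :=
  inferInstanceAs (AddCommGroup (M ⊗[R] P))

noncomputable instance : Module R (BiTensor R B C M P) :=
  inferInstanceAs (Module R (M ⊗[R] P))

noncomputable instance : Module (B ⊗[R] C) (BiTensor R B C M P) := bimodule R B C M P

noncomputable instance : Module C (BiTensor R B C M P) := rightTensorModule R C M P

lemma BiTensor.smul_of (b : B) (c : C) (m : M) (p : P) :
    (b ⊗ₜ[R] c : B ⊗[R] C) • BiTensor.of R B C M P (m ⊗ₜ[R] p) =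
      BiTensor.of R B C M P ((b • m) ⊗ₜ[R] (c • p)) := by
  show bimodMap R B C M P (b ⊗ₜ[R] c) (m ⊗ₜ[R] p) = _
  rw [show bimodMap R B C M P (b ⊗ₜ[R] c) = Algebra.lsmul R R (M ⊗[R] P) b * rightSMulEnd R C M P c
    from Algebra.TensorProduct.lift_tmul _ _ _ b c]
  simp only [Module.End.mul_apply, TensorProduct.smul_tmul', rightSMulEnd_tmul,
    Algebra.lsmul_coe]
  rfl

lemma BiTensor.rsmul_of (c : C) (m : M) (p : P) :
    c • BiTensor.of R B C M P (m ⊗ₜ[R] p) = BiTensor.of R B C M P (m ⊗ₜ[R] (c • p)) := by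
  show rightSMulEnd R C M P c (m ⊗ₜ[R] p) = _
  simp only [rightSMulEnd_tmul]
  rfl

attribute [local instance] Algebra.TensorProduct.rightAlgebra in
instance : IsScalarTower C (B ⊗[R] C) (BiTensor R B C M P) := by
  refine IsScalarTower.of_algebraMap_smul
    (R := C) (A := B ⊗[R] C) (M := BiTensor R B C M P) fun c x => ?_
  have halg : algebraMap C (B ⊗[R] C) c = (1 : B) ⊗ₜ[R] c := rfl
  have key : ∀ y : M ⊗[R] P,
      ((1 : B) ⊗ₜ[R] c : B ⊗[R] C) • BiTensor.of R B C M P y =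
        c • BiTensor.of R B C M P y := by
    intro y
    induction y using TensorProduct.induction_on with
    | zero =>
        show ((1 : B) ⊗ₜ[R] c : B ⊗[R] C) • (0 : BiTensor R B C M P) =
          c • (0 : BiTensor R B C M P)
        rw [smul_zero, smul_zero]
    | tmul m p => rw [BiTensor.smul_of, one_smul, BiTensor.rsmul_of]
    | add u v hu hv =>
        have hadd : ∀ u v : M ⊗[R] P, BiTensor.of R B C M P (u + v) =
            BiTensor.of R B C M P u + BiTensor.of R B C M P v := fun _ _ => rfl
        rw [hadd, smul_add, smul_add, hu, hv]
  rw [halg]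
  exact key x

end BiTensorDef

section JetDef

variable (k A : Type*) [CommRing k] [CommRing A] [Algebra k A]

/-- The diagonal ideal `I_{A/k} ⊆ A ⊗[k] A`: the kernel of the multiplication map. -/
noncomputable abbrev diagIdeal : Ideal (A ⊗[k] A) := KaehlerDifferential.ideal k A

/-- The `N`-th jet algebra `J^N(A/k) = (A ⊗[k] A) ⧸ I_{A/k}^{N+1}`. -/
noncomputable abbrev JetAlg (N : ℕ) : Type _ :=
  (A ⊗[k] A) ⧸ (diagIdeal k A ^ (N + 1))

/-- The first `A`-algebra structure map `p₁ : A → J^N(A/k)`, `a ↦ a ⊗ 1`. -/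
noncomputable def jetP1 (N : ℕ) : A →+* JetAlg k A N :=
  (Ideal.Quotient.mk _).comp Algebra.TensorProduct.includeLeftRingHom

/-- The second `A`-algebra structure map `p₂ : A → J^N(A/k)`, `a ↦ 1 ⊗ a`. -/
noncomputable def jetP2 (N : ℕ) : A →+* JetAlg k A N :=
  (Ideal.Quotient.mk _).comp (Algebra.TensorProduct.includeRight : A →ₐ[k] A ⊗[k] A).toRingHom

variable (M : Type*) [AddCommGroup M] [Module k M] [Module A M] [IsScalarTower k A M]

/-- `A ⊗[k] M` is a module over `A ⊗[k] A` via `(a ⊗ b) • (x ⊗ m) = (a * x) ⊗ (b • m)`. -/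
noncomputable instance jetTensorModule : Module (A ⊗[k] A) (A ⊗[k] M) :=
  bimodule k A A A M

@[simp] lemma jet_smul_tmul (a b x : A) (m : M) :
    (a ⊗ₜ[k] b : A ⊗[k] A) • (x ⊗ₜ[k] m : A ⊗[k] M) = (a * x) ⊗ₜ[k] (b • m) := by
  show bimodMap k A A A M (a ⊗ₜ[k] b) (x ⊗ₜ[k] m) = _
  rw [show bimodMap k A A A M (a ⊗ₜ[k] b) = Algebra.lsmul k k (A ⊗[k] M) a * rightSMulEnd k A A M b
    from Algebra.TensorProduct.lift_tmul _ _ _ a b]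
  simp [Module.End.mul_apply, TensorProduct.smul_tmul', smul_eq_mul]

instance jetTower1 : IsScalarTower A (A ⊗[k] A) (A ⊗[k] M) :=
  IsScalarTower.of_algebraMap_smul fun a x => by
    have halg : algebraMap A (A ⊗[k] A) a = a ⊗ₜ[k] (1 : A) := rfl
    rw [halg]
    induction x using TensorProduct.induction_on with
    | zero => simp
    | tmul y m => rw [jet_smul_tmul, TensorProduct.smul_tmul']; simp
    | add u v hu hv => rw [smul_add, hu, hv, smul_add]

instance jetTower0 : IsScalarTower k (A ⊗[k] A) (A ⊗[k] M) :=
  IsScalarTower.of_algebraMap_smul fun r x => by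
    rw [IsScalarTower.algebraMap_apply k A (A ⊗[k] A), algebraMap_smul, algebraMap_smul]

/-- The `N`-th jet module `J^N(M/k) = (A ⊗[k] M) ⧸ I_{A/k}^{N+1}·(A ⊗[k] M)`;
it is a module over `J^N(A/k)`. -/
noncomputable abbrev JetMod (N : ℕ) : Type _ :=
  (A ⊗[k] M) ⧸ ((diagIdeal k A ^ (N + 1)) • (⊤ : Submodule (A ⊗[k] A) (A ⊗[k] M)))

/-- The universal (filtered) derivation `d^N_{M/k} : M → J^N(M/k)`, `m ↦ [1 ⊗ m]`. -/
noncomputable def jetD (N : ℕ) : M → JetMod k A M N :=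
  fun m => Submodule.Quotient.mk ((1 : A) ⊗ₜ[k] m)

instance jetModTower (N : ℕ) : IsScalarTower k A (JetMod k A M N) :=
  IsScalarTower.of_algebraMap_smul fun r x => by
    obtain ⟨y, rfl⟩ := Submodule.Quotient.mk_surjective _ x
    rw [← Submodule.Quotient.mk_smul, ← Submodule.Quotient.mk_smul, algebraMap_smul]

instance jetQuotTower (N : ℕ) : IsScalarTower A (JetAlg k A N) (JetMod k A M N) := by
  refine IsScalarTower.of_algebraMap_smul
    (R := A) (A := JetAlg k A N) (M := JetMod k A M N) fun a x => ?_
  obtain ⟨y, rfl⟩ := Submodule.Quotient.mk_surjective _ x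
  have h1 : algebraMap A (JetAlg k A N) a • (Submodule.Quotient.mk y : JetMod k A M N) =
      Submodule.Quotient.mk ((algebraMap A (A ⊗[k] A) a) • y) := rfl
  rw [h1, algebraMap_smul (A ⊗[k] A) a y, Submodule.Quotient.mk_smul]

end JetDef

end JetPaper


namespace JetPaper

section ExactSequenceI

variable (A B : Type*) [CommRing A] [CommRing B] [Algebra A B] (I : Ideal B)

/-- The canonical map `B ⊗[A] B → (B/I) ⊗[A] (B/I)`. -/
noncomputable def quotTensorMap : (B ⊗[A] B) →ₐ[A] ((B ⧸ I) ⊗[A] (B ⧸ I)) :=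
  Algebra.TensorProduct.map (Ideal.Quotient.mkₐ A I) (Ideal.Quotient.mkₐ A I)

lemma quotTensorMap_diag_le :
    Ideal.map (quotTensorMap A B I) (diagIdeal A B) ≤ diagIdeal A (B ⧸ I) := by
  rw [Ideal.map_le_iff_le_comap]
  intro x hx
  have hx0 : (Algebra.TensorProduct.lmul' A (S := B)) x = 0 := by
    simpa [RingHom.mem_ker] using hx
  have hcomp : (Algebra.TensorProduct.lmul' A (S := B ⧸ I)).comp (quotTensorMap A B I) =
      (Ideal.Quotient.mkₐ A I).comp (Algebra.TensorProduct.lmul' A (S := B)) := by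
    apply Algebra.TensorProduct.ext
    · ext b
      simp [quotTensorMap]
    · ext b
      simp [quotTensorMap]
  rw [Ideal.mem_comap]
  have h := AlgHom.congr_fun hcomp x
  simp only [AlgHom.coe_comp, Function.comp_apply] at h
  rw [RingHom.mem_ker, h, hx0, map_zero]

/-- The canonical ring map `J^N(B/A) → J^N((B/I)/A)`. -/
noncomputable def jetAlgQuotMap (N : ℕ) : JetAlg A B N →+* JetAlg A (B ⧸ I) N :=
  Ideal.Quotient.lift (diagIdeal A B ^ (N + 1))
    ((Ideal.Quotient.mk (diagIdeal A (B ⧸ I) ^ (N + 1))).comp (quotTensorMap A B I).toRingHom)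
    (fun x hx => by
      rw [RingHom.comp_apply, Ideal.Quotient.eq_zero_iff_mem]
      have h1 : (quotTensorMap A B I) x ∈
          Ideal.map (quotTensorMap A B I) (diagIdeal A B ^ (N + 1)) :=
        Ideal.mem_map_of_mem _ hx
      rw [Ideal.map_pow] at h1
      exact Ideal.pow_right_mono (quotTensorMap_diag_le A B I) (N + 1) h1)

variable (M : Type*) [AddCommGroup M] [Module A M] [Module B M] [IsScalarTower A B M]
  [Module (B ⧸ I) M] [IsScalarTower B (B ⧸ I) M] [IsScalarTower A (B ⧸ I) M]

/-- `J^N_{(B/I)/A}(M)` as a module over `J^N(B/A)`, via the canonical ring map. -/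
noncomputable def jetPulledModule (N : ℕ) :
    Module (JetAlg A B N) (JetMod A (B ⧸ I) M N) :=
  Module.compHom _ (jetAlgQuotMap A B I N)

/-- The underlying linear map `B ⊗[A] M → (B ⧸ I) ⊗[A] M`. -/
noncomputable def pi0 : (B ⊗[A] M) →ₗ[A] ((B ⧸ I) ⊗[A] M) :=
  LinearMap.rTensor M (Ideal.Quotient.mkₐ A I).toLinearMap

lemma pi0_tmul (b : B) (m : M) :
    pi0 A B I M (b ⊗ₜ[A] m) = (Ideal.Quotient.mk I b) ⊗ₜ[A] m := rfl

lemma pi0_surjective : Function.Surjective (pi0 A B I M) :=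
  LinearMap.rTensor_surjective M (g := (Ideal.Quotient.mkₐ A I).toLinearMap)
    Ideal.Quotient.mk_surjective

lemma pi0_smul (z : B ⊗[A] B) (y : B ⊗[A] M) :
    pi0 A B I M (z • y) = quotTensorMap A B I z • pi0 A B I M y := by
  induction z using TensorProduct.induction_on with
  | zero => simp; exact (zero_smul ((B ⧸ I) ⊗[A] (B ⧸ I)) (pi0 A B I M y)).symm
  | add u v hu hv => rw [add_smul, map_add, hu, hv, map_add, add_smul]
  | tmul b c =>
    induction y using TensorProduct.induction_on with
    | zero => simp
    | add u v hu hv => rw [smul_add, map_add, map_add, hu, hv, smul_add]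
    | tmul x m =>
      have hq : quotTensorMap A B I (b ⊗ₜ[A] c) =
          (Ideal.Quotient.mk I b) ⊗ₜ[A] (Ideal.Quotient.mk I c) := by
        simp [quotTensorMap]
      rw [jet_smul_tmul, pi0_tmul, hq, pi0_tmul, jet_smul_tmul, map_mul]
      congr 1
      rw [← Ideal.Quotient.algebraMap_eq, algebraMap_smul]

lemma lmul_comp_quotTensorMap :
    (Algebra.TensorProduct.lmul' A (S := B ⧸ I)).comp (quotTensorMap A B I) =
      (Ideal.Quotient.mkₐ A I).comp (Algebra.TensorProduct.lmul' A (S := B)) := by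
  apply Algebra.TensorProduct.ext
  · ext b
    simp [quotTensorMap]
  · ext b
    simp [quotTensorMap]

lemma quotTensorMap_surjective : Function.Surjective (quotTensorMap A B I) := by
  intro w
  induction w using TensorProduct.induction_on with
  | zero => exact ⟨0, map_zero _⟩
  | tmul x y =>
    obtain ⟨b, rfl⟩ := Ideal.Quotient.mk_surjective x
    obtain ⟨c, rfl⟩ := Ideal.Quotient.mk_surjective y
    exact ⟨b ⊗ₜ[A] c, by simp [quotTensorMap]⟩
  | add u v hu hv =>
    obtain ⟨x, hx⟩ := hu
    obtain ⟨y, hy⟩ := hv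
    exact ⟨x + y, by rw [map_add, hx, hy]⟩

lemma quotTensorMap_diag_eq :
    Ideal.map (quotTensorMap A B I) (diagIdeal A B) = diagIdeal A (B ⧸ I) := by
  refine le_antisymm (quotTensorMap_diag_le A B I) ?_
  intro w hw
  obtain ⟨u, hu⟩ := quotTensorMap_surjective A B I w
  set b := Algebra.TensorProduct.lmul' A (S := B) u with hb
  have hw0 : Algebra.TensorProduct.lmul' A (S := B ⧸ I) w = 0 := by
    simpa [RingHom.mem_ker] using hw
  have hbI : b ∈ I := by
    have h := AlgHom.congr_fun (lmul_comp_quotTensorMap A B I) u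
    simp only [AlgHom.coe_comp, Function.comp_apply] at h
    rw [hu, hw0] at h
    rw [← Ideal.Quotient.eq_zero_iff_mem]
    exact h.symm
  have hz : u - b ⊗ₜ[A] (1 : B) ∈ diagIdeal A B := by
    have : Algebra.TensorProduct.lmul' A (S := B) (u - b ⊗ₜ[A] (1 : B)) = 0 := by
      rw [map_sub, Algebra.TensorProduct.lmul'_apply_tmul, mul_one, ← hb, sub_self]
    simpa [RingHom.mem_ker] using this
  have hzval : quotTensorMap A B I (u - b ⊗ₜ[A] (1 : B)) = w := by
    rw [map_sub, hu]
    have : quotTensorMap A B I (b ⊗ₜ[A] (1 : B)) = 0 := by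
      have hb0 : Ideal.Quotient.mk I b = 0 := Ideal.Quotient.eq_zero_iff_mem.mpr hbI
      simp [quotTensorMap, hb0]
    rw [this, sub_zero]
  rw [← hzval]
  exact Ideal.mem_map_of_mem _ hz

lemma quotTensorMap_diag_pow_eq (N : ℕ) :
    Ideal.map (quotTensorMap A B I) (diagIdeal A B ^ (N + 1)) =
      diagIdeal A (B ⧸ I) ^ (N + 1) := by
  rw [Ideal.map_pow, quotTensorMap_diag_eq]

lemma pi0_maps_smul_top (N : ℕ) :
    ∀ y ∈ (diagIdeal A B ^ (N + 1) • ⊤ : Submodule (B ⊗[A] B) (B ⊗[A] M)),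
      pi0 A B I M y ∈
        (diagIdeal A (B ⧸ I) ^ (N + 1) • ⊤ : Submodule ((B ⧸ I) ⊗[A] (B ⧸ I)) ((B ⧸ I) ⊗[A] M)) := by
  intro y hy
  refine Submodule.smul_induction_on hy ?_ ?_
  · intro z hz x _
    rw [pi0_smul]
    refine Submodule.smul_mem_smul ?_ Submodule.mem_top
    rw [← quotTensorMap_diag_pow_eq A B I N]
    exact Ideal.mem_map_of_mem _ hz
  · intro u v hu hv
    rw [map_add]
    exact add_mem hu hv

lemma pi0_smul_top_surj (N : ℕ) :
    ∀ w ∈ (diagIdeal A (B ⧸ I) ^ (N + 1) • ⊤ :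
        Submodule ((B ⧸ I) ⊗[A] (B ⧸ I)) ((B ⧸ I) ⊗[A] M)),
      ∃ y ∈ (diagIdeal A B ^ (N + 1) • ⊤ : Submodule (B ⊗[A] B) (B ⊗[A] M)),
        pi0 A B I M y = w := by
  intro w hw
  refine Submodule.smul_induction_on hw ?_ ?_
  · intro z' hz' x' _
    have hz'' : z' ∈ Ideal.map (quotTensorMap A B I) (diagIdeal A B ^ (N + 1)) := by
      rw [quotTensorMap_diag_pow_eq]; exact hz'
    obtain ⟨z, hz, rfl⟩ :=
      (Ideal.mem_map_iff_of_surjective _ (quotTensorMap_surjective A B I)).mp hz''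
    obtain ⟨x, rfl⟩ := pi0_surjective A B I M x'
    exact ⟨z • x, Submodule.smul_mem_smul hz Submodule.mem_top, pi0_smul A B I M z x⟩
  · intro u v hu hv
    obtain ⟨y₁, hy₁, rfl⟩ := hu
    obtain ⟨y₂, hy₂, rfl⟩ := hv
    exact ⟨y₁ + y₂, add_mem hy₁ hy₂, map_add _ _ _⟩

lemma pi0_ker :
    LinearMap.ker (pi0 A B I M) =
      LinearMap.range (LinearMap.rTensor M (I.restrictScalars A).subtype) := by
  have hexact : Function.Exact ((I.restrictScalars A).subtype)
      (Ideal.Quotient.mkₐ A I).toLinearMap := by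
    rw [LinearMap.exact_iff]
    ext x
    simp only [LinearMap.mem_ker, Submodule.range_subtype, Submodule.restrictScalars_mem]
    exact Ideal.Quotient.eq_zero_iff_mem
  have h := rTensor_exact (f := (I.restrictScalars A).subtype)
    (g := (Ideal.Quotient.mkₐ A I).toLinearMap) M hexact Ideal.Quotient.mk_surjective
  rw [LinearMap.exact_iff] at h
  exact h

lemma jetAlgQuotMap_p1_eq_zero (N : ℕ) {b : B} (hb : b ∈ I) :
    jetAlgQuotMap A B I N (jetP1 A B N b) = 0 := by
  have h1 : jetP1 A B N b = Ideal.Quotient.mk (diagIdeal A B ^ (N + 1)) (b ⊗ₜ[A] 1) := rfl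
  have h2 : quotTensorMap A B I (b ⊗ₜ[A] (1 : B)) = 0 := by
    have hb0 : Ideal.Quotient.mk I b = 0 := Ideal.Quotient.eq_zero_iff_mem.mpr hb
    simp [quotTensorMap, hb0]
  rw [h1]
  show Ideal.Quotient.mk _ (quotTensorMap A B I (b ⊗ₜ[A] 1)) = 0
  rw [h2, map_zero]

lemma jetAlgQuotMap_map_p1_eq_zero (N : ℕ) {r : JetAlg A B N}
    (hr : r ∈ Ideal.map (jetP1 A B N) I) : jetAlgQuotMap A B I N r = 0 := by
  have hle : Ideal.map (jetP1 A B N) I ≤ RingHom.ker (jetAlgQuotMap A B I N) :=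
    Ideal.map_le_iff_le_comap.mpr fun i hi => by
      simp only [Ideal.mem_comap, RingHom.mem_ker]
      exact jetAlgQuotMap_p1_eq_zero A B I N hi
  exact hle hr

set_option maxHeartbeats 1000000 in
set_option synthInstance.maxHeartbeats 200000 in
/-- (Exact sequence I) For `A → B`, an ideal `I ⊆ B` and a `B/I`-module
`M`, the canonical `J^N(B/A)`-linear map `J^N_{B/A}(M) → J^N_{(B/I)/A}(M)` is surjective
with kernel `I·J^N_{B/A}(M)` (where `I` acts through `p₁`):
`0 → I·J^N_{B/A}(M) → J^N_{B/A}(M) → J^N_{(B/I)/A}(M) → 0` is exact. -/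
theorem jet_exact_sequence_I (N : ℕ) :
    letI := jetPulledModule A B I M N
    ∃ π : JetMod A B M N →ₗ[JetAlg A B N] JetMod A (B ⧸ I) M N,
      (∀ (b : B) (m : M),
        π (Submodule.Quotient.mk (b ⊗ₜ[A] m)) =
          Submodule.Quotient.mk ((Ideal.Quotient.mk I b) ⊗ₜ[A] m)) ∧
      Function.Surjective π ∧
      LinearMap.ker π =
        Ideal.map (jetP1 A B N) I • (⊤ : Submodule (JetAlg A B N) (JetMod A B M N)) := by
  letI instP : Module (JetAlg A B N) (JetMod A (B ⧸ I) M N) := jetPulledModule A B I M N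
  -- the (B ⊗[A] B)-module structure on the target jet module
  letI instR : Module (B ⊗[A] B) (JetMod A (B ⧸ I) M N) :=
    Module.compHom _ ((Ideal.Quotient.mk (diagIdeal A (B ⧸ I) ^ (N + 1))).comp
      (quotTensorMap A B I).toRingHom)
  have smulR : ∀ (z : B ⊗[A] B) (w : (B ⧸ I) ⊗[A] M),
      z • (Submodule.Quotient.mk w : JetMod A (B ⧸ I) M N) =
        Submodule.Quotient.mk (quotTensorMap A B I z • w) := fun z w => rfl
  -- the map on the ambient tensor products
  have g_smul : ∀ (z : B ⊗[A] B) (y : B ⊗[A] M),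
      (Submodule.Quotient.mk (pi0 A B I M (z • y)) : JetMod A (B ⧸ I) M N) =
        z • Submodule.Quotient.mk (pi0 A B I M y) := by
    intro z y
    rw [pi0_smul, smulR]
  set g : (B ⊗[A] M) →ₗ[B ⊗[A] B] JetMod A (B ⧸ I) M N :=
    { toFun := fun y => Submodule.Quotient.mk (pi0 A B I M y)
      map_add' := fun u v => by
        simp only [map_add, Submodule.Quotient.mk_add]
      map_smul' := fun z y => g_smul z y } with hg
  have hker : (diagIdeal A B ^ (N + 1) • ⊤ : Submodule (B ⊗[A] B) (B ⊗[A] M)) ≤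
      LinearMap.ker g := by
    intro y hy
    rw [LinearMap.mem_ker, hg]
    show (Submodule.Quotient.mk (pi0 A B I M y) : JetMod A (B ⧸ I) M N) = 0
    rw [Submodule.Quotient.mk_eq_zero]
    exact pi0_maps_smul_top A B I M N y hy
  set π₁ := Submodule.liftQ _ g hker with hπ₁
  have π₁_mk : ∀ y : B ⊗[A] M,
      π₁ (Submodule.Quotient.mk y) = Submodule.Quotient.mk (pi0 A B I M y) := fun y => rfl
  -- the pulled-back smul agrees
  have smulP : ∀ (z : B ⊗[A] B) (t : JetMod A (B ⧸ I) M N),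
      (Ideal.Quotient.mk (diagIdeal A B ^ (N + 1)) z) • t = z • t := fun z t => rfl
  have πsmul : ∀ (r : JetAlg A B N) (x : JetMod A B M N), π₁ (r • x) = r • π₁ x := by
    intro r x
    obtain ⟨z, rfl⟩ := Ideal.Quotient.mk_surjective r
    obtain ⟨y, rfl⟩ := Submodule.Quotient.mk_surjective _ x
    show π₁ (Ideal.Quotient.mk (diagIdeal A B ^ (N + 1)) z • Submodule.Quotient.mk y) =
      Ideal.Quotient.mk (diagIdeal A B ^ (N + 1)) z • π₁ (Submodule.Quotient.mk y)
    rw [Module.Quotient.mk_smul_mk, π₁_mk, π₁_mk, smulP, ← g_smul]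
  set π : JetMod A B M N →ₗ[JetAlg A B N] JetMod A (B ⧸ I) M N :=
    { toFun := π₁, map_add' := map_add π₁, map_smul' := fun r x => πsmul r x } with hπ
  refine ⟨π, ?_, ?_, ?_⟩
  · exact fun b m => rfl
  · intro t
    obtain ⟨w, rfl⟩ := Submodule.Quotient.mk_surjective _ t
    obtain ⟨y, rfl⟩ := pi0_surjective A B I M w
    exact ⟨Submodule.Quotient.mk y, rfl⟩
  · apply le_antisymm
    · intro x hx
      obtain ⟨y, rfl⟩ := Submodule.Quotient.mk_surjective _ x
      rw [LinearMap.mem_ker] at hx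
      have hx' : (Submodule.Quotient.mk (pi0 A B I M y) : JetMod A (B ⧸ I) M N) = 0 := hx
      rw [Submodule.Quotient.mk_eq_zero] at hx'
      obtain ⟨u, hu, huy⟩ := pi0_smul_top_surj A B I M N _ hx'
      have hv : y - u ∈ LinearMap.range (LinearMap.rTensor M (I.restrictScalars A).subtype) := by
        rw [← pi0_ker, LinearMap.mem_ker, map_sub, huy, sub_self]
      obtain ⟨t, ht⟩ := hv
      have hy_eq : (Submodule.Quotient.mk y : JetMod A B M N) =
          Submodule.Quotient.mk (y - u) := by
        rw [Submodule.Quotient.eq]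
        simpa using hu
      rw [hy_eq, ← ht]
      clear hy_eq ht hx hx' huy hu
      induction t using TensorProduct.induction_on with
      | zero => rw [map_zero]; exact Submodule.zero_mem _
      | tmul i m =>
        have key : (Submodule.Quotient.mk (LinearMap.rTensor M
            (I.restrictScalars A).subtype (i ⊗ₜ[A] m)) : JetMod A B M N) =
            jetP1 A B N (i : B) • Submodule.Quotient.mk ((1 : B) ⊗ₜ[A] m) := by
          have h1 : jetP1 A B N (i : B) =
              Ideal.Quotient.mk (diagIdeal A B ^ (N + 1)) ((i : B) ⊗ₜ[A] 1) := rfl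
          rw [h1, Module.Quotient.mk_smul_mk]
          congr 1
          rw [LinearMap.rTensor_tmul, jet_smul_tmul]
          simp
        rw [key]
        exact Submodule.smul_mem_smul (Ideal.mem_map_of_mem _ i.2) Submodule.mem_top
      | add u' v' hu' hv' =>
        rw [map_add, Submodule.Quotient.mk_add]
        exact Submodule.add_mem _ hu' hv'
    · refine Submodule.smul_le.mpr fun r hr x _ => ?_
      rw [LinearMap.mem_ker, map_smul]
      have : r • π x = jetAlgQuotMap A B I N r • π x := rfl
      rw [this, jetAlgQuotMap_map_p1_eq_zero A B I N hr, zero_smul]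

end ExactSequenceI

end JetPaper
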